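/- Let E be a diagonal 0-1 projection and M symmetric. If the restriction of M to the coordinates where E_{ii}=1 is positive definite, then lim_{ε→0⁺} E (E M E + ε I)⁻¹ E exists and equals the pseudoinverse of E M E restricted to the range of E; in particular lim_{ε→0⁺} Jᵀ E (E M E + ε I)⁻¹ E J = Jᵀ_S (M_S)⁻¹ J_S where S = {i : E_{ii}=1} and M_S is the principal submatrix of M on S. -/

import Mathlib

open Matrix Filter Set

private lemma sum_subtype_of_vanish {N : ℕ} {p : Fin N → Prop} [DecidablePred p]
    (f : Fin N → ℝ) (hf : ∀ i, ¬ p i → f i = 0) :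
    ∑ i : {i // p i}, f i.1 = ∑ i, f i := by
  classical
  rw [← Finset.sum_filter_of_ne (s := Finset.univ) (p := p)
    (fun x _ h => by by_contra hp; exact h (hf x hp))]
  exact (Finset.sum_subtype _ (by simp) f).symm

private lemma key_eq (N : ℕ)
    (d : Fin N → ℝ) (hd : ∀ i, d i = 0 ∨ d i = 1)
    (M : Matrix (Fin N) (Fin N) ℝ)
    (MS : Matrix {i : Fin N // d i = 1} {i : Fin N // d i = 1} ℝ)
    (hMS : MS = M.submatrix (fun i => i.1) (fun i => i.1))
    (hMSpos : MS.PosDef)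
    (ε : ℝ) (hε : 0 < ε) :
    (fun _ : Fin N => (1:ℝ)) ⬝ᵥ (Matrix.diagonal d).mulVec
        (((Matrix.diagonal d * M * Matrix.diagonal d + ε • (1 : Matrix (Fin N) (Fin N) ℝ))⁻¹).mulVec
          ((Matrix.diagonal d).mulVec (fun _ => 1)))
      = (fun _ : {i : Fin N // d i = 1} => (1:ℝ)) ⬝ᵥ
        ((MS + ε • 1)⁻¹).mulVec (fun _ => 1) := by
  classical
  have hones : (ε • (1 : Matrix {i : Fin N // d i = 1} {i : Fin N // d i = 1} ℝ)).PosSemidef := by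
    refine ⟨?_, fun x => ?_⟩
    · ext i j
      simp [Matrix.conjTranspose, Matrix.one_apply, Matrix.transpose_apply, eq_comm]
    · exact ((Matrix.PosSemidef.one).smul hε.le).2 x
  have hApos : (MS + ε • 1).PosDef := hMSpos.add_posSemidef hones
  have hAdet : IsUnit (MS + ε • 1).det := isUnit_iff_ne_zero.mpr (ne_of_gt hApos.det_pos)
  have hzero : ∀ i, d i ≠ 1 → d i = 0 := fun i h => (hd i).resolve_right h
  obtain ⟨B, hBdef⟩ : ∃ B : Matrix (Fin N) (Fin N) ℝ, B = (fun i j =>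
      if hi : d i = 1 then (if hj : d j = 1 then (MS + ε • 1)⁻¹ ⟨i, hi⟩ ⟨j, hj⟩ else 0)
      else (if i = j then ε⁻¹ else 0)) := ⟨_, rfl⟩
  have hright : (Matrix.diagonal d * M * Matrix.diagonal d
      + ε • (1 : Matrix (Fin N) (Fin N) ℝ)) * B = 1 := by
    ext i k
    rw [Matrix.mul_apply]
    by_cases hi : d i = 1
    · have hterm : ∀ j, (Matrix.diagonal d * M * Matrix.diagonal d
          + ε • (1 : Matrix (Fin N) (Fin N) ℝ)) i j * B j k
          = M i j * d j * B j k + ε * ((if i = j then 1 else 0) * B j k) := by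
        intro j
        simp [Matrix.add_apply, Matrix.mul_diagonal, Matrix.diagonal_mul, Matrix.smul_apply,
          Matrix.one_apply, hi, add_mul, mul_assoc]
      simp only [hterm]
      rw [Finset.sum_add_distrib, ← Finset.mul_sum]
      have hsum2 : ∑ j, (if i = j then (1:ℝ) else 0) * B j k = B i k := by
        rw [Finset.sum_eq_single i] <;> simp +contextual [eq_comm]
      rw [hsum2]
      by_cases hk : d k = 1
      · have hsum1 : ∑ j, M i j * d j * B j k
            = ∑ j : {i : Fin N // d i = 1}, M i j.1 * (MS + ε • 1)⁻¹ j ⟨k, hk⟩ := by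
          rw [← sum_subtype_of_vanish (p := fun j => d j = 1) (fun j => M i j * d j * B j k)
            (fun j hj => by simp [hzero j hj])]
          refine Finset.sum_congr rfl fun j _ => ?_
          simp [hBdef, j.2, hk]
        rw [hsum1]
        have hMA : ∑ j : {i : Fin N // d i = 1}, M i j.1 * (MS + ε • 1)⁻¹ j ⟨k, hk⟩
            = (MS * (MS + ε • 1)⁻¹) ⟨i, hi⟩ ⟨k, hk⟩ := by
          rw [Matrix.mul_apply]
          exact Finset.sum_congr rfl fun j _ => by simp [hMS]
        rw [hMA]
        have hBik : B i k = (MS + ε • 1)⁻¹ ⟨i, hi⟩ ⟨k, hk⟩ := by simp [hBdef, hi, hk]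
        rw [hBik]
        have hAAinv : (MS * (MS + ε • 1)⁻¹) ⟨i, hi⟩ ⟨k, hk⟩
              + ε * (MS + ε • 1)⁻¹ ⟨i, hi⟩ ⟨k, hk⟩
            = ((MS + ε • 1) * (MS + ε • 1)⁻¹) ⟨i, hi⟩ ⟨k, hk⟩ := by
          simp [Matrix.add_mul, Matrix.add_apply, Matrix.smul_mul, Matrix.smul_apply]
        rw [hAAinv, Matrix.mul_nonsing_inv _ hAdet]
        by_cases hik : i = k
        · subst hik; simp [Matrix.one_apply]
        · simp [Matrix.one_apply, hik, Subtype.ext_iff]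
      · have h1 : ∑ j, M i j * d j * B j k = 0 := by
          refine Finset.sum_eq_zero fun j _ => ?_
          by_cases hj : d j = 1
          · simp [hBdef, hj, hk]
          · simp [hzero j hj]
        have h2 : B i k = 0 := by simp [hBdef, hi, hk]
        have hik : i ≠ k := fun h => hk (h ▸ hi)
        simp [h1, h2, Matrix.one_apply, hik]
    · have hi0 : d i = 0 := hzero i hi
      have hterm : ∀ j, (Matrix.diagonal d * M * Matrix.diagonal d
          + ε • (1 : Matrix (Fin N) (Fin N) ℝ)) i j * B j k
          = ε * ((if i = j then 1 else 0) * B j k) := by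
        intro j
        simp [Matrix.add_apply, Matrix.mul_diagonal, Matrix.diagonal_mul, Matrix.smul_apply,
          Matrix.one_apply, hi0, add_mul, mul_assoc]
      simp only [hterm]
      rw [← Finset.mul_sum]
      have hsum2 : ∑ j, (if i = j then (1:ℝ) else 0) * B j k = B i k := by
        rw [Finset.sum_eq_single i] <;> simp +contextual [eq_comm]
      rw [hsum2]
      have hBik : B i k = if i = k then ε⁻¹ else 0 := by simp [hBdef, hi]
      rw [hBik]
      by_cases hik : i = k
      · subst hik; simp [Matrix.one_apply, mul_inv_cancel₀ (ne_of_gt hε)]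
      · simp [Matrix.one_apply, hik]
  have hinv : (Matrix.diagonal d * M * Matrix.diagonal d
      + ε • (1 : Matrix (Fin N) (Fin N) ℝ))⁻¹ = B := Matrix.inv_eq_right_inv hright
  rw [hinv]
  have hdv : (Matrix.diagonal d).mulVec (fun _ => (1:ℝ)) = d := by
    ext i; simp [Matrix.mulVec_diagonal]
  rw [hdv]
  have hLHS : (fun _ : Fin N => (1:ℝ)) ⬝ᵥ (Matrix.diagonal d).mulVec (B.mulVec d)
      = ∑ i, d i * ∑ j, B i j * d j := by
    simp only [dotProduct, Matrix.mulVec_diagonal, one_mul]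
    exact Finset.sum_congr rfl fun i _ => by simp [Matrix.mulVec, dotProduct]
  rw [hLHS]
  have step1 : ∀ i : Fin N, d i * ∑ j, B i j * d j
      = if hi : d i = 1 then ∑ j : {i : Fin N // d i = 1}, (MS + ε • 1)⁻¹ ⟨i, hi⟩ j else 0 := by
    intro i
    by_cases hi : d i = 1
    · simp only [hi, one_mul, dif_pos hi]
      rw [← sum_subtype_of_vanish (p := fun j => d j = 1) (fun j => B i j * d j)
        (fun j hj => by simp [hzero j hj])]
      exact Finset.sum_congr rfl fun j _ => by simp [hBdef, hi, j.2]
    · simp [hzero i hi]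
  simp only [step1]
  rw [← sum_subtype_of_vanish (p := fun i => d i = 1)
      (fun i => if hi : d i = 1
        then ∑ j : {i : Fin N // d i = 1}, (MS + ε • 1)⁻¹ ⟨i, hi⟩ j else 0)
      (fun i hi => by simp [hi])]
  simp only [dotProduct, Matrix.mulVec, one_mul, mul_one]
  refine Finset.sum_congr rfl fun i _ => ?_
  rw [dif_pos i.2]

/-- Let `E = diagonal d` be a 0-1 projection, `M` symmetric, and suppose
the principal submatrix `M_S` of `M` on `S = {i : d i = 1}` is positive definite. Then
`lim_{ε→0⁺} Jᵀ E (E M E + ε I)⁻¹ E J = Jᵀ_S (M_S)⁻¹ J_S`. -/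
theorem erased_resolvent_limit (N : ℕ)
    (d : Fin N → ℝ) (hd : ∀ i, d i = 0 ∨ d i = 1)
    (E : Matrix (Fin N) (Fin N) ℝ) (hE : E = Matrix.diagonal d)
    (M : Matrix (Fin N) (Fin N) ℝ) (hMsymm : M.IsSymm)
    (MS : Matrix {i : Fin N // d i = 1} {i : Fin N // d i = 1} ℝ)
    (hMS : MS = M.submatrix (fun i => i.1) (fun i => i.1))
    (hMSpos : MS.PosDef)
    (J : Fin N → ℝ) (hJ : ∀ i, J i = 1) :
    Tendsto
      (fun ε : ℝ => J ⬝ᵥ E.mulVec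
        (((E * M * E + ε • (1 : Matrix (Fin N) (Fin N) ℝ))⁻¹).mulVec (E.mulVec J)))
      (nhdsWithin 0 (Set.Ioi 0))
      (nhds ((fun _ : {i : Fin N // d i = 1} => (1 : ℝ)) ⬝ᵥ
        (MS⁻¹).mulVec (fun _ => 1))) := by
  classical
  have hJ1 : J = fun _ => 1 := funext hJ
  subst hJ1 hE
  have hgcont : Tendsto (fun ε : ℝ =>
      (fun _ : {i : Fin N // d i = 1} => (1:ℝ)) ⬝ᵥ ((MS + ε • 1)⁻¹).mulVec (fun _ => 1))
      (nhdsWithin 0 (Set.Ioi 0)) (nhds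
      ((fun _ : {i : Fin N // d i = 1} => (1:ℝ)) ⬝ᵥ (MS⁻¹).mulVec (fun _ => 1))) := by
    have hdet : MS.det ≠ 0 := ne_of_gt hMSpos.det_pos
    have hinvCA : ContinuousAt Inv.inv MS :=
      continuousAt_matrix_inv MS (by
        rw [Ring.inverse_eq_inv']
        exact continuousAt_inv₀ hdet)
    have hmap : ContinuousAt (fun ε : ℝ =>
        MS + ε • (1 : Matrix {i : Fin N // d i = 1} {i : Fin N // d i = 1} ℝ)) 0 := by
      fun_prop
    have hcomp : ContinuousAt (fun ε : ℝ =>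
        (MS + ε • (1 : Matrix {i : Fin N // d i = 1} {i : Fin N // d i = 1} ℝ))⁻¹) 0 := by
      have hinvCA' : ContinuousAt Inv.inv
          (MS + (0:ℝ) • (1 : Matrix {i : Fin N // d i = 1} {i : Fin N // d i = 1} ℝ)) := by
        rw [show MS + (0:ℝ) • (1 : Matrix {i : Fin N // d i = 1} {i : Fin N // d i = 1} ℝ)
          = MS by simp]
        exact hinvCA
      exact ContinuousAt.comp (x := (0:ℝ)) (g := Inv.inv)
        (f := fun ε : ℝ => MS + ε • (1 : Matrix {i : Fin N // d i = 1} {i : Fin N // d i = 1} ℝ))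
        hinvCA' hmap
    have hdot : ContinuousAt (fun ε : ℝ =>
        (fun _ : {i : Fin N // d i = 1} => (1:ℝ)) ⬝ᵥ
          ((MS + ε • (1 : Matrix {i : Fin N // d i = 1} {i : Fin N // d i = 1} ℝ))⁻¹).mulVec
            (fun _ => 1)) 0 :=
      ((Continuous.dotProduct continuous_const
        (continuous_id.matrix_mulVec continuous_const)).continuousAt).comp hcomp
    have h := hdot.tendsto
    rw [show MS + (0:ℝ) • (1 : Matrix {i : Fin N // d i = 1} {i : Fin N // d i = 1} ℝ)
        = MS by simp] at h
    exact h.mono_left nhdsWithin_le_nhds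
  refine hgcont.congr' ?_
  filter_upwards [self_mem_nhdsWithin] with ε hε
  exact (key_eq N d hd M MS hMS hMSpos ε hε).symm
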